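/- arXiv:2505.17577 — 4 statements merged into one kernel-verified Lean document; each statement's English description precedes it below -/
import Mathlib

section
/- Let X : [0,T] → ℝ≥0 be continuous with X² differentiable, c ≥ 0, and A : [0,T] → ℝ≥0 measurable with (1/2)(d/dt)X² + cX² ≤ A·X almost everywhere on [0,T]. Then for all t ∈ [0,T], X(t) + c∫₀ᵗ X(τ)dτ ≤ X(0) + ∫₀ᵗ A(τ)dτ. -/
open MeasureTheory Set

lemma ptwise_aux (X A D c ε : ℝ) (hX : 0 ≤ X) (hA : 0 ≤ A) (hc : 0 ≤ c) (hε : 0 < ε)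
    (hD : (1/2)*D + c*X^2 ≤ A*X) :
    D / (2 * Real.sqrt (X^2 + ε^2)) ≤ A - c*X + c*ε := by
  set s := Real.sqrt (X^2 + ε^2) with hs_def
  have hs : 0 < s := Real.sqrt_pos.2 (by positivity)
  have hXs : X ≤ s := (Real.le_sqrt hX (by positivity)).2 (by nlinarith)
  have hsX : s ≤ X + ε := by
    rw [hs_def, show X + ε = Real.sqrt ((X+ε)^2) from (Real.sqrt_sq (by positivity)).symm]
    exact Real.sqrt_le_sqrt (by nlinarith)
  rw [div_le_iff₀ (by positivity)]
  nlinarith [mul_nonneg hA (sub_nonneg.2 hXs),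
    mul_nonneg (mul_nonneg hc hε.le) (sub_nonneg.2 hXs),
    mul_nonneg (mul_nonneg hc hX) (by linarith : (0:ℝ) ≤ X + ε - s)]

/-- ODE Lemma: if `X ≥ 0` is continuous on `[0,T]`, `X²` is differentiable with
derivative `D`, and `(1/2) D + c X² ≤ A X` a.e. on `[0,T]` with `A ≥ 0` measurable
(and integrable), then `X t + c ∫₀ᵗ X ≤ X 0 + ∫₀ᵗ A` for all `t ∈ [0,T]`. -/
theorem stmt_0 (T : ℝ) (hT : 0 < T) (c : ℝ) (hc : 0 ≤ c)
    (X A D : ℝ → ℝ)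
    (hXcont : ContinuousOn X (Icc 0 T))
    (hXpos : ∀ t ∈ Icc 0 T, 0 ≤ X t)
    (hderiv : ∀ t ∈ Icc 0 T, HasDerivAt (fun s => X s ^ 2) (D t) t)
    (hAmeas : Measurable A)
    (hApos : ∀ t ∈ Icc 0 T, 0 ≤ A t)
    (hAint : IntervalIntegrable A volume 0 T)
    (hineq : ∀ᵐ t, t ∈ Icc 0 T → (1/2) * D t + c * X t ^ 2 ≤ A t * X t) :
    ∀ t ∈ Icc 0 T,
      X t + c * ∫ τ in (0:ℝ)..t, X τ ≤ X 0 + ∫ τ in (0:ℝ)..t, A τ := by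
  intro t ht
  obtain ⟨ht0, htT⟩ := ht
  -- integrability facts on [0, t]
  have hsub : Icc (0:ℝ) t ⊆ Icc 0 T := Icc_subset_Icc le_rfl htT
  have hXint : IntegrableOn X (Icc 0 t) := (hXcont.mono hsub).integrableOn_Icc
  have hAint' : IntegrableOn A (Icc 0 t) :=
    (intervalIntegrable_iff_integrableOn_Icc_of_le ht0).1
      (hAint.mono_set (by rw [uIcc_of_le ht0, uIcc_of_le hT.le]; exact hsub))
  -- the key estimate for every ε > 0
  have key : ∀ ε : ℝ, 0 < ε →
      X t + c * ∫ τ in (0:ℝ)..t, X τ ≤ (X 0 + ∫ τ in (0:ℝ)..t, A τ) + ε * (1 + c * t) := by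
    intro ε hε
    set g : ℝ → ℝ := fun s => Real.sqrt (X s ^ 2 + ε ^ 2) with hg_def
    set g' : ℝ → ℝ := fun s => D s / (2 * g s) with hg'_def
    set B : ℝ → ℝ := fun s => A s - c * X s + c * ε with hB_def
    set φ : ℝ → ℝ := fun s => max (g' s) (B s) with hφ_def
    have hgcont : ContinuousOn g (Icc 0 t) :=
      Real.continuous_sqrt.comp_continuousOn
        (((hXcont.mono hsub).pow 2).add continuousOn_const)
    have hgderiv : ∀ x ∈ Ioo (0:ℝ) t, HasDerivWithinAt g (g' x) (Ioi x) x := by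
      intro x hx
      have hxmem : x ∈ Icc 0 T := hsub ⟨hx.1.le, hx.2.le⟩
      have h1 : HasDerivAt (fun s => X s ^ 2 + ε ^ 2) (D x) x :=
        (hderiv x hxmem).add_const _
      have hne : X x ^ 2 + ε ^ 2 ≠ 0 := by positivity
      have h2 := (Real.hasDerivAt_sqrt hne).comp x h1
      have : g' x = 1 / (2 * Real.sqrt (X x ^ 2 + ε ^ 2)) * D x := by
        simp [hg'_def, hg_def]; ring
      rw [this]
      exact h2.hasDerivWithinAt
    -- a.e. identification of φ with B on [0, t]
    have haeB : ∀ᵐ x ∂(volume.restrict (Icc 0 t)), φ x = B x := by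
      have h1 : ∀ᵐ x ∂(volume.restrict (Icc 0 t)),
          x ∈ Icc 0 T → (1/2) * D x + c * X x ^ 2 ≤ A x * X x :=
        ae_restrict_of_ae hineq
      have h2 : ∀ᵐ x ∂(volume.restrict (Icc 0 t)), x ∈ Icc 0 t :=
        ae_restrict_mem measurableSet_Icc
      filter_upwards [h1, h2] with x hx1 hx2
      have hxT : x ∈ Icc 0 T := hsub hx2
      have := ptwise_aux (X x) (A x) (D x) c ε (hXpos x hxT) (hApos x hxT) hc hε (hx1 hxT)
      exact max_eq_right this
    have hBint : IntegrableOn B (Icc 0 t) :=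
      ((hAint'.sub (hXint.const_mul c)).add (integrableOn_const measure_Icc_lt_top.ne))
    have hφint : IntegrableOn φ (Icc 0 t) := hBint.congr (haeB.mono fun x hx => hx.symm)
    have hφle : ∀ x ∈ Ioo (0:ℝ) t, g' x ≤ φ x := fun x _ => le_max_left _ _
    have hFTC := intervalIntegral.sub_le_integral_of_hasDeriv_right_of_le ht0 hgcont hgderiv hφint hφle
    -- compute the integral of φ
    have hφB : (∫ y in (0:ℝ)..t, φ y) = ∫ y in (0:ℝ)..t, B y := by
      apply intervalIntegral.integral_congr_ae
      have : ∀ᵐ x, x ∈ Icc 0 t → φ x = B x :=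
        (ae_restrict_iff' measurableSet_Icc).1 haeB
      filter_upwards [this] with x hx hx'
      exact hx (mem_Icc_of_Ioc (by rwa [uIoc_of_le ht0] at hx'))
    have hXii : IntervalIntegrable X volume 0 t :=
      (intervalIntegrable_iff_integrableOn_Icc_of_le ht0).2 hXint
    have hAii : IntervalIntegrable A volume 0 t :=
      (intervalIntegrable_iff_integrableOn_Icc_of_le ht0).2 hAint'
    have hBval : (∫ y in (0:ℝ)..t, B y)
        = (∫ y in (0:ℝ)..t, A y) - c * (∫ y in (0:ℝ)..t, X y) + c * ε * t := by
      rw [hB_def]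
      rw [intervalIntegral.integral_add ((hAii.sub (hXii.const_mul c))) intervalIntegrable_const,
        intervalIntegral.integral_sub hAii (hXii.const_mul c),
        intervalIntegral.integral_const_mul, intervalIntegral.integral_const]
      simp; ring
    -- endpoint estimates
    have hXt : X t ≤ g t :=
      (Real.le_sqrt (hXpos t ⟨ht0, htT⟩) (by positivity)).2 (by nlinarith)
    have hg0 : g 0 ≤ X 0 + ε := by
      rw [hg_def, show X 0 + ε = Real.sqrt ((X 0 + ε)^2)
        from (Real.sqrt_sq (by have := hXpos 0 ⟨le_rfl, hT.le⟩; positivity)).symm]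
      exact Real.sqrt_le_sqrt (by nlinarith [hXpos 0 ⟨le_rfl, hT.le⟩])
    rw [hφB, hBval] at hFTC
    nlinarith [mul_nonneg (mul_nonneg hc hε.le) ht0]
  -- pass to the limit ε → 0
  have hpos : (0:ℝ) < 1 + c * t := by nlinarith [mul_nonneg hc ht0]
  refine le_of_forall_pos_le_add fun δ hδ => ?_
  have := key (δ / (1 + c * t)) (by positivity)
  calc X t + c * ∫ τ in (0:ℝ)..t, X τ
      ≤ (X 0 + ∫ τ in (0:ℝ)..t, A τ) + (δ / (1 + c * t)) * (1 + c * t) := this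
    _ = (X 0 + ∫ τ in (0:ℝ)..t, A τ) + δ := by rw [div_mul_cancel₀]; exact hpos.ne'
end

section
/- Let T > 0, c > 0, C > 0, and let L, H : [0,T] → ℝ be continuous nonnegative functions such that L(0) < c/(2C) and for all t ∈ [0,T], L(t) + c∫₀ᵗ H(τ)dτ ≤ L(0) + C∫₀ᵗ L(τ)H(τ)dτ. Then for all t ∈ [0,T], L(t) + (c/2)∫₀ᵗ H(τ)dτ ≤ L(0). -/
open MeasureTheory Set Filter Topology

/-- Bootstrap lemma: if `L, H ≥ 0` are continuous on `[0,T]`, `L 0 < c/(2C)` and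
`L t + c ∫₀ᵗ H ≤ L 0 + C ∫₀ᵗ L H` for all `t ∈ [0,T]`, then
`L t + (c/2) ∫₀ᵗ H ≤ L 0` on `[0,T]`. -/
theorem stmt_1 (T c C : ℝ) (hT : 0 < T) (hc : 0 < c) (hC : 0 < C)
    (L H : ℝ → ℝ)
    (hLcont : ContinuousOn L (Icc 0 T)) (hHcont : ContinuousOn H (Icc 0 T))
    (hLpos : ∀ t ∈ Icc 0 T, 0 ≤ L t) (hHpos : ∀ t ∈ Icc 0 T, 0 ≤ H t)
    (hL0 : L 0 < c / (2 * C))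
    (hineq : ∀ t ∈ Icc 0 T,
      L t + c * ∫ τ in (0:ℝ)..t, H τ ≤ L 0 + C * ∫ τ in (0:ℝ)..t, L τ * H τ) :
    ∀ t ∈ Icc 0 T, L t + (c / 2) * ∫ τ in (0:ℝ)..t, H τ ≤ L 0 := by
  set b : ℝ := c / (2 * C) with hb_def
  have hb_pos : 0 < b := div_pos hc (by linarith)
  have hCb : C * b = c / 2 := by
    field_simp [hb_def]
    rw [hb_def]; field_simp
  -- key step: if L ≤ b on [0,t], then the conclusion holds at t
  have key : ∀ t ∈ Icc 0 T, (∀ s ∈ Icc 0 t, L s ≤ b) →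
      L t + (c / 2) * ∫ τ in (0:ℝ)..t, H τ ≤ L 0 := by
    intro t ht hbound
    have hsub : Icc (0:ℝ) t ⊆ Icc 0 T := Icc_subset_Icc le_rfl ht.2
    have huIcc : uIcc (0:ℝ) t = Icc 0 t := uIcc_of_le ht.1
    have hH_int : IntervalIntegrable H volume 0 t := by
      apply ContinuousOn.intervalIntegrable
      rw [huIcc]; exact hHcont.mono hsub
    have hLH_int : IntervalIntegrable (fun τ => L τ * H τ) volume 0 t := by
      apply ContinuousOn.intervalIntegrable
      rw [huIcc]; exact ((hLcont.mono hsub).mul (hHcont.mono hsub))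
    have hbH_int : IntervalIntegrable (fun τ => b * H τ) volume 0 t := by
      exact hH_int.const_mul b
    have hmono : (∫ τ in (0:ℝ)..t, L τ * H τ) ≤ ∫ τ in (0:ℝ)..t, b * H τ := by
      apply intervalIntegral.integral_mono_on ht.1 hLH_int hbH_int
      intro s hs
      exact mul_le_mul_of_nonneg_right (hbound s hs) (hHpos s (hsub hs))
    have hconst : (∫ τ in (0:ℝ)..t, b * H τ) = b * ∫ τ in (0:ℝ)..t, H τ := by
      exact intervalIntegral.integral_const_mul b H
    have h1 := hineq t ht
    have h2 : C * (∫ τ in (0:ℝ)..t, L τ * H τ) ≤ (c / 2) * ∫ τ in (0:ℝ)..t, H τ := by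
      calc C * (∫ τ in (0:ℝ)..t, L τ * H τ) ≤ C * (b * ∫ τ in (0:ℝ)..t, H τ) := by
            rw [← hconst]; exact mul_le_mul_of_nonneg_left hmono hC.le
        _ = (c / 2) * ∫ τ in (0:ℝ)..t, H τ := by rw [← mul_assoc, hCb]
    have hHnn : 0 ≤ ∫ τ in (0:ℝ)..t, H τ := by
      apply intervalIntegral.integral_nonneg (μ := volume) ht.1
      exact fun s hs => hHpos s (hsub hs)
    nlinarith
  -- the bootstrap set
  set A : Set ℝ := {t | t ∈ Icc 0 T ∧ ∀ s ∈ Icc 0 t, L s ≤ b} with hA_def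
  have h0A : (0:ℝ) ∈ A := by
    refine ⟨⟨le_rfl, hT.le⟩, ?_⟩
    intro s hs
    have : s = 0 := le_antisymm hs.2 hs.1
    rw [this]; exact hL0.le
  have hAne : A.Nonempty := ⟨0, h0A⟩
  have hAbdd : BddAbove A := ⟨T, fun t ht => ht.1.2⟩
  set u : ℝ := sSup A with hu_def
  have hu0 : 0 ≤ u := le_csSup hAbdd h0A
  have huT : u ≤ T := csSup_le hAne (fun t ht => ht.1.2)
  have hu_mem : u ∈ Icc (0:ℝ) T := ⟨hu0, huT⟩
  have hbound_lt : ∀ s, 0 ≤ s → s < u → L s ≤ b := by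
    intro s hs0 hsu
    obtain ⟨t, htA, hst⟩ := exists_lt_of_lt_csSup hAne hsu
    exact htA.2 s ⟨hs0, hst.le⟩
  have hLu : L u ≤ b := by
    rcases eq_or_lt_of_le hu0 with h | h
    · rw [← h]; exact hL0.le
    · -- u > 0 : use continuity from the left
      have hcw : ContinuousWithinAt L (Ico 0 u) u := by
        apply (hLcont u hu_mem).mono
        exact fun s hs => ⟨hs.1, hs.2.le.trans huT⟩
      have hne : (𝓝[Ico (0:ℝ) u] u).NeBot := by
        rw [← mem_closure_iff_nhdsWithin_neBot, closure_Ico h.ne]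
        exact ⟨hu0, le_rfl⟩
      apply le_of_tendsto hcw
      filter_upwards [self_mem_nhdsWithin] with s hs
      exact hbound_lt s hs.1 hs.2
  have huA : u ∈ A := by
    refine ⟨hu_mem, ?_⟩
    intro s hs
    rcases eq_or_lt_of_le hs.2 with h | h
    · rw [h]; exact hLu
    · exact hbound_lt s hs.1 h
  -- u = T
  have huT_eq : u = T := by
    by_contra hne
    have huT' : u < T := lt_of_le_of_ne huT hne
    -- strict bound at u
    have hkey := key u hu_mem huA.2
    have hint_nonneg : 0 ≤ ∫ τ in (0:ℝ)..u, H τ := by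
      apply intervalIntegral.integral_nonneg (μ := volume) hu0
      intro s hs
      exact hHpos s ⟨hs.1, hs.2.trans huT⟩
    have hLu_lt : L u < b := by nlinarith
    -- continuity: L < b on a right neighborhood
    have hcw : ContinuousWithinAt L (Icc 0 T) u := hLcont u hu_mem
    have hev : {s | L s < b} ∈ 𝓝[Icc (0:ℝ) T] u := by
      have : Iio b ∈ 𝓝 (L u) := Iio_mem_nhds hLu_lt
      exact hcw this
    rw [Metric.mem_nhdsWithin_iff] at hev
    obtain ⟨ε, hε, hball⟩ := hev
    replace hball : ∀ s, dist s u < ε → s ∈ Icc (0:ℝ) T → L s < b := by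
      intro s h1 h2
      exact hball ⟨Metric.mem_ball.mpr h1, h2⟩
    set u' : ℝ := min (u + ε / 2) T with hu'_def
    have hu'_gt : u < u' := lt_min (by linarith) huT'
    have hu'_le : u' ≤ T := min_le_right _ _
    have hu'A : u' ∈ A := by
      refine ⟨⟨hu0.trans hu'_gt.le, hu'_le⟩, ?_⟩
      intro s hs
      rcases le_or_gt s u with h | h
      · exact huA.2 s ⟨hs.1, h⟩
      · apply (hball s ?_ ⟨hs.1, hs.2.trans hu'_le⟩).le
        rw [Real.dist_eq, abs_lt]
        constructor
        · linarith
        · have : s ≤ u + ε / 2 := hs.2.trans (min_le_left _ _)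
          linarith
    exact absurd (le_csSup hAbdd hu'A) (not_le.mpr hu'_gt)
  -- conclude
  intro t ht
  apply key t ht
  intro s hs
  exact huA.2 s ⟨hs.1, by rw [huT_eq]; exact hs.2.trans ht.2⟩
end

section
/- Let β > 0 and c₀ > 0 and c > 0. Then there exists a constant C, depending only on β, c₀, and c, such that for all t ≥ 0: ∫₀ᵗ ((1 + c₀t)/(1 + c₀τ))^β · e^{-c(t-τ)} dτ ≤ C. -/
open MeasureTheory Real

/-- For `β, c₀, c > 0` there is a constant `C` (depending only on them) such that
`∫₀ᵗ ((1+c₀t)/(1+c₀τ))^β e^{-c(t-τ)} dτ ≤ C` for all `t ≥ 0`. -/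
theorem stmt_2 (β c₀ c : ℝ) (hβ : 0 < β) (hc₀ : 0 < c₀) (hc : 0 < c) :
    ∃ C : ℝ, 0 < C ∧ ∀ t : ℝ, 0 ≤ t →
      (∫ τ in (0:ℝ)..t,
        ((1 + c₀ * t) / (1 + c₀ * τ)) ^ β * Real.exp (-c * (t - τ))) ≤ C := by
  set K : ℝ := 1 + 2 * β * c₀ / c with hKdef
  have hK1 : (1:ℝ) ≤ K := by
    have : 0 ≤ 2 * β * c₀ / c := by positivity
    rw [hKdef]; linarith
  have hK0 : 0 < K := lt_of_lt_of_le one_pos hK1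
  refine ⟨K ^ β * (2 / c), by positivity, ?_⟩
  intro t ht
  -- Pointwise bound of the integrand
  have key : ∀ τ ∈ Set.Icc (0:ℝ) t,
      ((1 + c₀ * t) / (1 + c₀ * τ)) ^ β * Real.exp (-c * (t - τ))
        ≤ K ^ β * Real.exp (-(c/2) * (t - τ)) := by
    intro τ hτ
    obtain ⟨hτ0, hτt⟩ := hτ
    set s : ℝ := t - τ with hs
    have hs0 : 0 ≤ s := by simp [hs]; linarith
    have hden : 0 < 1 + c₀ * τ := by nlinarith
    have h1 : (1 + c₀ * t) / (1 + c₀ * τ) ≤ 1 + c₀ * s := by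
      rw [div_le_iff₀ hden]
      nlinarith [mul_nonneg (mul_nonneg hc₀.le hτ0) (mul_nonneg hc₀.le hs0)]
    have hy0 : 0 ≤ c / (2 * β) * s := by positivity
    have hyexp : c / (2 * β) * s ≤ Real.exp (c / (2 * β) * s) := by
      have := Real.add_one_le_exp (c / (2 * β) * s)
      linarith
    have hexp1 : (1:ℝ) ≤ Real.exp (c / (2 * β) * s) := Real.one_le_exp hy0
    have h2 : 1 + c₀ * s ≤ K * Real.exp (c / (2 * β) * s) := by
      have hcs : c₀ * s = (2 * β * c₀ / c) * (c / (2 * β) * s) := by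
        field_simp
      have hb : 0 ≤ 2 * β * c₀ / c := by positivity
      nlinarith [mul_le_mul_of_nonneg_left hyexp hb]
    have hbase0 : (0:ℝ) ≤ (1 + c₀ * t) / (1 + c₀ * τ) := by positivity
    have h3 : ((1 + c₀ * t) / (1 + c₀ * τ)) ^ β
        ≤ (K * Real.exp (c / (2 * β) * s)) ^ β :=
      Real.rpow_le_rpow hbase0 (h1.trans h2) hβ.le
    have h4 : (K * Real.exp (c / (2 * β) * s)) ^ β
        = K ^ β * Real.exp ((c/2) * s) := by
      rw [Real.mul_rpow hK0.le (Real.exp_nonneg _), ← Real.exp_mul]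
      congr 1
      field_simp
    have h5 : ((1 + c₀ * t) / (1 + c₀ * τ)) ^ β ≤ K ^ β * Real.exp ((c/2) * s) :=
      h3.trans_eq h4
    have hexppos : 0 < Real.exp (-c * s) := Real.exp_pos _
    calc ((1 + c₀ * t) / (1 + c₀ * τ)) ^ β * Real.exp (-c * s)
        ≤ (K ^ β * Real.exp ((c/2) * s)) * Real.exp (-c * s) :=
          mul_le_mul_of_nonneg_right h5 hexppos.le
      _ = K ^ β * Real.exp (-(c/2) * s) := by
          rw [mul_assoc, ← Real.exp_add]; ring_nf
  -- Integrability of both sides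
  have hcont1 : ContinuousOn
      (fun τ => ((1 + c₀ * t) / (1 + c₀ * τ)) ^ β * Real.exp (-c * (t - τ)))
      (Set.Icc 0 t) := by
    have hd : ContinuousOn (fun τ : ℝ => (1 + c₀ * t) / (1 + c₀ * τ)) (Set.Icc 0 t) := by
      apply ContinuousOn.div continuousOn_const (by fun_prop)
      intro x hx
      have : 0 < 1 + c₀ * x := by nlinarith [hx.1]
      exact this.ne'
    have := hd.rpow_const (fun x hx => Or.inr hβ.le)
    exact this.mul (by fun_prop)
  have hInt1 : IntervalIntegrable
      (fun τ => ((1 + c₀ * t) / (1 + c₀ * τ)) ^ β * Real.exp (-c * (t - τ)))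
      volume 0 t := by
    apply ContinuousOn.intervalIntegrable
    rwa [Set.uIcc_of_le ht]
  have hInt2 : IntervalIntegrable
      (fun τ => K ^ β * Real.exp (-(c/2) * (t - τ))) volume 0 t := by
    apply Continuous.intervalIntegrable
    fun_prop
  have hmono := intervalIntegral.integral_mono_on ht hInt1 hInt2 key
  refine hmono.trans ?_
  -- Compute the right-hand integral via FTC
  have hderiv : ∀ x ∈ Set.uIcc (0:ℝ) t,
      HasDerivAt (fun τ : ℝ => (2 / c) * Real.exp (-(c/2) * (t - τ)))
        (Real.exp (-(c/2) * (t - x))) x := by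
    intro x _
    have h1 : HasDerivAt (fun τ : ℝ => -(c/2) * (t - τ)) (c/2) x := by
      have := (hasDerivAt_id x).const_sub t
      have h2 := this.const_mul (-(c/2))
      simpa using h2
    have h3 := h1.exp
    have h4 := h3.const_mul (2 / c)
    refine h4.congr_deriv ?_
    have hcc : (2 / c) * (c / 2) = (1:ℝ) := by field_simp
    linear_combination (Real.exp (-(c/2) * (t - x))) * hcc
  have hIntD : IntervalIntegrable (fun x => Real.exp (-(c/2) * (t - x))) volume 0 t := by
    apply Continuous.intervalIntegrable; fun_prop
  have hcalc := intervalIntegral.integral_eq_sub_of_hasDerivAt hderiv hIntD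
  have hval : (∫ τ in (0:ℝ)..t, K ^ β * Real.exp (-(c/2) * (t - τ)))
      = K ^ β * ((2 / c) * Real.exp (-(c/2) * (t - t)) - (2 / c) * Real.exp (-(c/2) * (t - 0))) := by
    rw [intervalIntegral.integral_const_mul, hcalc]
  rw [hval]
  have he1 : Real.exp (-(c/2) * (t - t)) = 1 := by simp
  have he2 : 0 < Real.exp (-(c/2) * (t - 0)) := Real.exp_pos _
  rw [he1]
  have hKb : 0 ≤ K ^ β := by positivity
  have : (2 / c) * 1 - (2 / c) * Real.exp (-(c/2) * (t - 0)) ≤ 2 / c := by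
    have : 0 ≤ (2 / c) * Real.exp (-(c/2) * (t - 0)) := by positivity
    linarith
  nlinarith
end

section
/- Suppose w solves ∂ₜw + (w·∇)w + w - u = 0 on [0,T]×ℝᵈ with w smooth and decaying, w(0) = w₀. Then for each j ∈ ℤ, the dyadic block wⱼ = Δ̇ⱼw satisfies ‖wⱼ(t)‖_{L²} + ∫₀ᵗ ‖wⱼ‖_{L²}dτ ≤ ‖Δ̇ⱼw₀‖_{L²} + ∫₀ᵗ ‖[Δ̇ⱼ, w·∇]w‖_{L²}dτ + ∫₀ᵗ ‖div w‖_{L∞}‖wⱼ‖_{L²}dτ + ∫₀ᵗ ‖uⱼ‖_{L²}dτ. -/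
open MeasureTheory Set

/-- A priori estimate for a dyadic block of the damped Euler equation
`∂ₜw + (w·∇)w + w - u = 0`. We work abstractly in the Hilbert space `H = L²`:
`wj t = Δ̇ⱼw(t)`, `uj t = Δ̇ⱼu(t)`, `cm t = [Δ̇ⱼ, w·∇]w(t)` is the commutator,
`tw t = (w·∇)Δ̇ⱼw(t)` is the transport term and `Dv t = ‖div w(t)‖_{L∞}`.
The block equation reads `wj' = -(tw) - wj + uj - cm`, and the transport term
satisfies `-⟪tw, wj⟫ ≤ (1/2)‖div w‖_{L∞}‖wj‖²` (from integration by parts).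
Then `‖wⱼ(t)‖ + ∫₀ᵗ‖wⱼ‖ ≤ ‖Δ̇ⱼw₀‖ + ∫₀ᵗ‖[Δ̇ⱼ,w·∇]w‖ + ∫₀ᵗ‖div w‖_{L∞}‖wⱼ‖ + ∫₀ᵗ‖uⱼ‖`. -/
theorem stmt_13 {H : Type*} [NormedAddCommGroup H] [InnerProductSpace ℝ H]
    (T : ℝ) (hT : 0 < T)
    (wj uj cm tw : ℝ → H) (Dv : ℝ → ℝ) (w0j : H)
    (hwj0 : wj 0 = w0j)
    (hcont : Continuous wj ∧ Continuous uj ∧ Continuous cm ∧ Continuous Dv)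
    (hDv : ∀ t ∈ Icc 0 T, 0 ≤ Dv t)
    (heq : ∀ t ∈ Icc 0 T, HasDerivAt wj (-(tw t) - wj t + uj t - cm t) t)
    (htransport : ∀ t ∈ Icc 0 T,
      -(inner ℝ (tw t) (wj t) : ℝ) ≤ (1 / 2) * Dv t * ‖wj t‖ ^ 2) :
    ∀ t ∈ Icc 0 T,
      ‖wj t‖ + ∫ τ in (0:ℝ)..t, ‖wj τ‖ ≤
        ‖w0j‖ + (∫ τ in (0:ℝ)..t, ‖cm τ‖) +
          (∫ τ in (0:ℝ)..t, Dv τ * ‖wj τ‖) + ∫ τ in (0:ℝ)..t, ‖uj τ‖ := by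
  obtain ⟨hwc, huc, hcc, hDc⟩ := hcont
  intro t ht
  obtain ⟨ht0, htT⟩ := ht
  have key : ∀ ε : ℝ, 0 < ε →
      ‖wj t‖ + ∫ τ in (0:ℝ)..t, ‖wj τ‖ ≤
        (‖w0j‖ + (∫ τ in (0:ℝ)..t, ‖cm τ‖) +
          (∫ τ in (0:ℝ)..t, Dv τ * ‖wj τ‖) + ∫ τ in (0:ℝ)..t, ‖uj τ‖) + ε * (1 + t) := by
    intro ε hε
    set g : ℝ → ℝ := fun τ => Dv τ * ‖wj τ‖ + ‖uj τ‖ + ‖cm τ‖ - ‖wj τ‖ + ε with hg_def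
    have hgc : Continuous g := by fun_prop
    set S : ℝ → ℝ := fun s => Real.sqrt ((inner ℝ (wj s) (wj s) : ℝ) + ε ^ 2) with hS_def
    have hSeq : ∀ s, S s = Real.sqrt (‖wj s‖ ^ 2 + ε ^ 2) := by
      intro s; simp [hS_def, real_inner_self_eq_norm_sq]
    have hSpos : ∀ s, 0 < S s := by
      intro s; rw [hSeq]
      exact Real.sqrt_pos.2 (by positivity)
    have hXS : ∀ s, ‖wj s‖ ≤ S s := by
      intro s; rw [hSeq]
      exact (Real.le_sqrt (norm_nonneg _) (by positivity)).2 (by nlinarith)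
    have hSX : ∀ s, S s ≤ ‖wj s‖ + ε := by
      intro s; rw [hSeq]
      have h1 : ‖wj s‖ ^ 2 + ε ^ 2 ≤ (‖wj s‖ + ε) ^ 2 := by
        have := norm_nonneg (wj s); nlinarith
      calc Real.sqrt (‖wj s‖ ^ 2 + ε ^ 2) ≤ Real.sqrt ((‖wj s‖ + ε) ^ 2) :=
            Real.sqrt_le_sqrt h1
        _ = ‖wj s‖ + ε := Real.sqrt_sq (by positivity)
    have hScont : Continuous S := by
      rw [hS_def]
      exact Real.continuous_sqrt.comp ((continuous_inner.comp (hwc.prodMk hwc)).add continuous_const)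
    -- derivative of S
    have hSderiv : ∀ s ∈ Icc 0 T, HasDerivAt S
        ((inner ℝ (-(tw s) - wj s + uj s - cm s) (wj s) : ℝ) / S s) s := by
      intro s hs
      have h1 : HasDerivAt (fun r => (inner ℝ (wj r) (wj r) : ℝ) + ε ^ 2)
          ((inner ℝ (wj s) (-(tw s) - wj s + uj s - cm s) : ℝ)
            + (inner ℝ (-(tw s) - wj s + uj s - cm s) (wj s) : ℝ)) s :=
        (HasDerivAt.inner ℝ (heq s hs) (heq s hs)).add_const _
      have hne : (inner ℝ (wj s) (wj s) : ℝ) + ε ^ 2 ≠ 0 := by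
        rw [real_inner_self_eq_norm_sq]; positivity
      have h2 := h1.sqrt hne
      convert h2 using 1
      rw [real_inner_comm (wj s) (-(tw s) - wj s + uj s - cm s), hS_def]
      have hS0 : Real.sqrt ((inner ℝ (wj s) (wj s) : ℝ) + ε ^ 2) ≠ 0 := (hSpos s).ne'
      field_simp
      ring
    -- derivative bound
    have hbound : ∀ s ∈ Icc 0 T,
        (inner ℝ (-(tw s) - wj s + uj s - cm s) (wj s) : ℝ) / S s ≤ g s := by
      intro s hs
      set X := ‖wj s‖ with hX
      have hX0 : 0 ≤ X := norm_nonneg _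
      have hinner : (inner ℝ (-(tw s) - wj s + uj s - cm s) (wj s) : ℝ) ≤
          (1 / 2) * Dv s * X ^ 2 - X ^ 2 + ‖uj s‖ * X + ‖cm s‖ * X := by
        have e1 : (inner ℝ (-(tw s) - wj s + uj s - cm s) (wj s) : ℝ) =
            -(inner ℝ (tw s) (wj s) : ℝ) - (inner ℝ (wj s) (wj s) : ℝ)
              + (inner ℝ (uj s) (wj s) : ℝ) - (inner ℝ (cm s) (wj s) : ℝ) := by
          simp [inner_sub_left, inner_add_left, inner_neg_left]
        rw [e1, real_inner_self_eq_norm_sq]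
        have h2 := htransport s hs
        have h3 := real_inner_le_norm (uj s) (wj s)
        have h4' : -(inner ℝ (cm s) (wj s) : ℝ) ≤ ‖cm s‖ * ‖wj s‖ :=
          (neg_le_abs _).trans (abs_real_inner_le_norm _ _)
        linarith [h2, h3, h4']
      rw [div_le_iff₀ (hSpos s)]
      have hDv' := hDv s hs
      have hU : (0:ℝ) ≤ ‖uj s‖ := norm_nonneg _
      have hC : (0:ℝ) ≤ ‖cm s‖ := norm_nonneg _
      have hS1 := hXS s
      have hS2 := hSX s
      have hS3 := hSpos s
      -- (X - ε) * S s ≤ X ^ 2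
      have haux : (X - ε) * S s ≤ X ^ 2 := by
        rcases le_or_gt X ε with h | h
        · nlinarith
        · nlinarith
      have hgs : g s = Dv s * X + ‖uj s‖ + ‖cm s‖ - X + ε := rfl
      rw [hgs]
      nlinarith [mul_nonneg hDv' hX0, mul_nonneg (mul_nonneg hDv' hX0) (sub_nonneg.2 hS1),
        mul_nonneg hU (sub_nonneg.2 hS1), mul_nonneg hC (sub_nonneg.2 hS1)]
    -- the integral function
    set G : ℝ → ℝ := fun s => ∫ τ in (0:ℝ)..s, g τ with hG_def
    have hGderiv : ∀ s, HasDerivAt G (g s) s := by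
      intro s
      exact intervalIntegral.integral_hasDerivAt_right (hgc.intervalIntegrable 0 s)
        (hgc.stronglyMeasurable.stronglyMeasurableAtFilter) hgc.continuousAt
    -- monotone
    set F : ℝ → ℝ := fun s => G s - S s with hF_def
    have hFd : ∀ s ∈ Icc 0 T, HasDerivAt F
        (g s - (inner ℝ (-(tw s) - wj s + uj s - cm s) (wj s) : ℝ) / S s) s :=
      fun s hs => (hGderiv s).sub (hSderiv s hs)
    have hmono : MonotoneOn F (Icc 0 T) := by
      apply monotoneOn_of_deriv_nonneg (convex_Icc 0 T)
      · intro s hs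
        exact ((hFd s hs).continuousAt).continuousWithinAt
      · intro s hs
        rw [interior_Icc] at hs
        exact ((hFd s (Ioo_subset_Icc_self hs)).differentiableAt).differentiableWithinAt
      · intro s hs
        rw [interior_Icc] at hs
        rw [(hFd s (Ioo_subset_Icc_self hs)).deriv]
        have := hbound s (Ioo_subset_Icc_self hs)
        linarith
    have hF0t : F 0 ≤ F t := hmono ⟨le_refl 0, le_of_lt hT⟩ ⟨ht0, htT⟩ ht0
    have hG0 : G 0 = 0 := intervalIntegral.integral_same
    have hStle : S t ≤ S 0 + G t := by
      have : G 0 - S 0 ≤ G t - S t := hF0t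
      linarith
    -- expand G t
    have hint1 : IntervalIntegrable (fun τ => Dv τ * ‖wj τ‖) volume 0 t :=
      (hDc.mul hwc.norm).intervalIntegrable 0 t
    have hint2 : IntervalIntegrable (fun τ => ‖uj τ‖) volume 0 t :=
      huc.norm.intervalIntegrable 0 t
    have hint3 : IntervalIntegrable (fun τ => ‖cm τ‖) volume 0 t :=
      hcc.norm.intervalIntegrable 0 t
    have hint4 : IntervalIntegrable (fun τ => ‖wj τ‖) volume 0 t :=
      hwc.norm.intervalIntegrable 0 t
    have hGt : G t = (∫ τ in (0:ℝ)..t, Dv τ * ‖wj τ‖) + (∫ τ in (0:ℝ)..t, ‖uj τ‖)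
        + (∫ τ in (0:ℝ)..t, ‖cm τ‖) - (∫ τ in (0:ℝ)..t, ‖wj τ‖) + ε * t := by
      simp only [hG_def, hg_def]
      rw [intervalIntegral.integral_add (((hint1.add hint2).add hint3).sub hint4)
        (intervalIntegrable_const), intervalIntegral.integral_sub ((hint1.add hint2).add hint3)
        hint4, intervalIntegral.integral_add (hint1.add hint2) hint3,
        intervalIntegral.integral_add hint1 hint2, intervalIntegral.integral_const]
      simp [smul_eq_mul]
      ring
    have hS0le : S 0 ≤ ‖w0j‖ + ε := by
      have := hSX 0
      rw [hwj0] at this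
      exact this
    have h1 : ‖wj t‖ ≤ S t := hXS t
    calc ‖wj t‖ + ∫ τ in (0:ℝ)..t, ‖wj τ‖ ≤ S t + ∫ τ in (0:ℝ)..t, ‖wj τ‖ := by linarith
      _ ≤ S 0 + G t + ∫ τ in (0:ℝ)..t, ‖wj τ‖ := by linarith
      _ ≤ (‖w0j‖ + (∫ τ in (0:ℝ)..t, ‖cm τ‖) +
          (∫ τ in (0:ℝ)..t, Dv τ * ‖wj τ‖) + ∫ τ in (0:ℝ)..t, ‖uj τ‖) + ε * (1 + t) := by
        rw [hGt] at *
        linarith [hS0le]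
  -- pass to the limit ε → 0
  apply le_of_forall_pos_le_add
  intro δ hδ
  have h1t : (0:ℝ) < 1 + t := by linarith
  have := key (δ / (1 + t)) (by positivity)
  calc ‖wj t‖ + ∫ τ in (0:ℝ)..t, ‖wj τ‖ ≤
      (‖w0j‖ + (∫ τ in (0:ℝ)..t, ‖cm τ‖) +
        (∫ τ in (0:ℝ)..t, Dv τ * ‖wj τ‖) + ∫ τ in (0:ℝ)..t, ‖uj τ‖) + (δ / (1 + t)) * (1 + t) :=
      this
    _ = (‖w0j‖ + (∫ τ in (0:ℝ)..t, ‖cm τ‖) +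
        (∫ τ in (0:ℝ)..t, Dv τ * ‖wj τ‖) + ∫ τ in (0:ℝ)..t, ‖uj τ‖) + δ := by
      rw [div_mul_cancel₀ _ h1t.ne']
end
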